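/- Let ρ, p, p_T : (0,∞) → [0,∞) be continuous with ρ compactly supported, not identically zero, and non-increasing, and p_T(r) ≤ p(r) for all r > 0. Let m(r) = 4π ∫₀^r s² ρ(s) ds with 2m(r) < r for r > 0, let λ(r) = −(1/2)·log(1 − 2m(r)/r), and let μ ∈ C²((0,∞)), continuous at 0, satisfy μ′(r) = e^{2λ(r)}( m(r)/r² + 4π r p(r) ), the field equation e^{−2λ}( μ″ + (μ′ + 1/r)(μ′ − λ′) ) = 8π p_T, and the asymptotic flatness condition lim_{r→∞} μ(r) = 0. Then for every r > 0 one has e^{μ(r)} − e^{μ(0)} ≥ (1/2) e^{μ(r)} ( e^{λ(r)} − 1 ), and consequently sup_{r>0} 2m(r)/r ≤ 1 − 1/(3 − 2e^{μ(0)})². -/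

import Mathlib

open Real MeasureTheory Filter Topology Set

set_option maxHeartbeats 1000000 in
/-- The sharpened Buchdahl-type estimate:
`e^{μ(r)} - e^{μ(0)} ≥ (1/2) e^{μ(r)} (e^{λ(r)} - 1)` and consequently
`sup_{r>0} 2m(r)/r ≤ 1 - 1/(3 - 2 e^{μ(0)})²`. -/
theorem buchdahl_sharpened
    (ρ p pT m lam μ μ' μ'' lam' : ℝ → ℝ)
    (hρ_cont : ContinuousOn ρ (Ioi 0))
    (hρ_nonneg : ∀ r > 0, 0 ≤ ρ r)
    (hρ_supp : ∃ R > 0, ∀ r ≥ R, ρ r = 0)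
    (hρ_ne : ∃ r > 0, ρ r ≠ 0)
    (hρ_mono : AntitoneOn ρ (Ioi 0))
    (hp_cont : ContinuousOn p (Ioi 0)) (hp_nonneg : ∀ r > 0, 0 ≤ p r)
    (hpT_cont : ContinuousOn pT (Ioi 0)) (hpT_nonneg : ∀ r > 0, 0 ≤ pT r)
    (hpT_le : ∀ r > 0, pT r ≤ p r)
    (hm : ∀ r, m r = 4 * π * ∫ s in (0:ℝ)..r, s ^ 2 * ρ s)
    (h2m : ∀ r > 0, 2 * m r < r)
    (hlam : ∀ r, lam r = -(1 / 2) * Real.log (1 - 2 * m r / r))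
    (hμ' : ∀ r > 0, HasDerivAt μ (μ' r) r)
    (hμ'' : ∀ r > 0, HasDerivAt μ' (μ'' r) r)
    (hμ''_cont : ContinuousOn μ'' (Ioi 0))
    (hlam' : ∀ r > 0, HasDerivAt lam (lam' r) r)
    (hfield1 : ∀ r > 0, μ' r = Real.exp (2 * lam r) * (m r / r ^ 2 + 4 * π * r * p r))
    (hfield2 : ∀ r > 0,
      Real.exp (-2 * lam r) * (μ'' r + (μ' r + 1 / r) * (μ' r - lam' r)) = 8 * π * pT r)
    (hμ0 : Tendsto μ (nhdsWithin 0 (Ioi 0)) (nhds (μ 0)))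
    (hμ_flat : Tendsto μ atTop (nhds 0)) :
    (∀ r > 0, Real.exp (μ r) - Real.exp (μ 0) ≥
      1 / 2 * Real.exp (μ r) * (Real.exp (lam r) - 1)) ∧
    sSup {x | ∃ r > 0, x = 2 * m r / r} ≤ 1 - 1 / (3 - 2 * Real.exp (μ 0)) ^ 2 := by
  have hf_cont : ContinuousOn (fun s : ℝ => s ^ 2 * ρ s) (Ioi 0) :=
    (continuous_pow 2).continuousOn.mul hρ_cont
  -- dichotomy: either the density is integrable near 0, or m vanishes identically
  have hdicho : (∀ r > 0, IntervalIntegrable (fun s => s ^ 2 * ρ s) volume 0 r) ∨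
      (∀ r > 0, m r = 0) := by
    by_cases hI : IntervalIntegrable (fun s => s ^ 2 * ρ s) volume 0 1
    · left
      intro r hr
      rcases le_total r 1 with h | h
      · apply hI.mono_set
        rw [uIcc_of_le hr.le, uIcc_of_le zero_le_one]
        exact Icc_subset_Icc le_rfl h
      · refine hI.trans ?_
        apply ContinuousOn.intervalIntegrable_of_Icc h
        exact hf_cont.mono fun x hx => lt_of_lt_of_le one_pos hx.1
    · right
      intro r hr
      have hni : ¬ IntervalIntegrable (fun s => s ^ 2 * ρ s) volume 0 r := by
        intro hcon
        rcases le_total 1 r with h | h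
        · exact hI (hcon.mono_set
            (by rw [uIcc_of_le hr.le, uIcc_of_le zero_le_one]; exact Icc_subset_Icc le_rfl h))
        · refine hI (hcon.trans ?_)
          apply ContinuousOn.intervalIntegrable_of_Icc h
          exact hf_cont.mono fun x hx => lt_of_lt_of_le hr hx.1
      rw [hm r, intervalIntegral.integral_undef hni, mul_zero]
  -- nonnegativity of m
  have hm0 : ∀ r > 0, 0 ≤ m r := by
    rcases hdicho with h | h
    · intro r hr
      rw [hm r]
      apply mul_nonneg (by positivity)
      apply intervalIntegral.integral_nonneg hr.le
      intro s hs
      rcases eq_or_lt_of_le hs.1 with h0 | h0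
      · simp [← h0]
      · exact mul_nonneg (sq_nonneg s) (hρ_nonneg s h0)
    · intro r hr; rw [h r hr]
  have hu_pos : ∀ r > 0, 0 < 1 - 2 * m r / r := by
    intro r hr
    rw [sub_pos]
    exact (div_lt_one hr).2 (h2m r hr)
  have hexp2 : ∀ r > 0, Real.exp (-(2 * lam r)) = 1 - 2 * m r / r := by
    intro r hr
    rw [hlam r, show -(2 * (-(1/2) * Real.log (1 - 2 * m r / r))) = Real.log (1 - 2 * m r / r)
      by ring]
    exact Real.exp_log (hu_pos r hr)
  have hsqrt : ∀ r > 0, Real.sqrt (1 - 2 * m r / r) = Real.exp (-(lam r)) := by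
    intro r hr
    rw [← hexp2 r hr, show -(2 * lam r) = -(lam r) + -(lam r) by ring, Real.exp_add, ← sq,
      Real.sqrt_sq (Real.exp_nonneg _)]
  have hlam_nonneg : ∀ r > 0, 0 ≤ lam r := by
    intro r hr
    have h1 : Real.exp (-(2 * lam r)) ≤ 1 := by
      rw [hexp2 r hr]
      have : 0 ≤ 2 * m r / r := div_nonneg (by linarith [hm0 r hr]) hr.le
      linarith
    have := Real.exp_le_one_iff.1 h1
    linarith
  have hμ'_nonneg : ∀ r > 0, 0 ≤ μ' r := by
    intro r hr
    rw [hfield1 r hr]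
    apply mul_nonneg (Real.exp_nonneg _)
    have h1 : 0 ≤ m r / r ^ 2 := div_nonneg (hm0 r hr) (by positivity)
    have h2 : 0 ≤ 4 * π * r * p r := by
      have := hp_nonneg r hr
      have := Real.pi_pos
      positivity
    linarith
  have hμmono : MonotoneOn μ (Ioi 0) := by
    apply monotoneOn_of_deriv_nonneg (convex_Ioi 0)
    · exact fun x hx => (hμ' x hx).continuousAt.continuousWithinAt
    · intro x hx
      rw [interior_Ioi] at hx
      exact (hμ' x hx).differentiableAt.differentiableWithinAt
    · intro x hx
      rw [interior_Ioi] at hx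
      rw [(hμ' x hx).deriv]
      exact hμ'_nonneg x hx
  have hμ0le : ∀ r > 0, μ 0 ≤ μ r := by
    intro r hr
    refine le_of_tendsto hμ0 ?_
    have hmem : Ioo (0:ℝ) r ∈ nhdsWithin 0 (Ioi 0) := Ioo_mem_nhdsGT_of_mem ⟨le_rfl, hr⟩
    filter_upwards [hmem] with s hs
    exact hμmono hs.1 hr hs.2.le
  have hμle0 : ∀ r > 0, μ r ≤ 0 := by
    intro r hr
    refine ge_of_tendsto hμ_flat ?_
    filter_upwards [eventually_ge_atTop r] with y hy
    exact hμmono hr (lt_of_lt_of_le hr hy) hy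
  have hμ00 : μ 0 ≤ 0 := le_trans (hμ0le 1 one_pos) (hμle0 1 one_pos)
  -- PART 1
  have key1 : ∀ r > 0, Real.exp (μ r) - Real.exp (μ 0) ≥
      1 / 2 * Real.exp (μ r) * (Real.exp (lam r) - 1) := by
    intro r hr
    rcases eq_or_lt_of_le (hm0 r hr) with hmr | hmr
    · -- m r = 0 : trivial case
      have hlam0 : lam r = 0 := by
        rw [hlam r, ← hmr]
        norm_num
      rw [hlam0]
      simp only [Real.exp_zero, sub_self, mul_zero]
      exact sub_nonneg.2 (Real.exp_le_exp.2 (hμ0le r hr))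
    · -- m r > 0 : necessarily in the integrable branch
      have hint : ∀ x > 0, IntervalIntegrable (fun s => s ^ 2 * ρ s) volume 0 x := by
        rcases hdicho with h | h
        · exact h
        · exact absurd (h r hr) (ne_of_gt hmr)
      -- derivative of m
      have hmd : ∀ x > 0, HasDerivAt m (4 * π * (x ^ 2 * ρ x)) x := by
        intro x hx
        have hG : HasDerivAt (fun u => ∫ s in (0:ℝ)..u, s ^ 2 * ρ s) (x ^ 2 * ρ x) x :=
          intervalIntegral.integral_hasDerivAt_right (hint x hx)
            (hf_cont.stronglyMeasurableAtFilter isOpen_Ioi x hx)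
            ((hf_cont x hx).continuousAt (Ioi_mem_nhds hx))
        have hmf : m = fun u => 4 * π * ∫ s in (0:ℝ)..u, s ^ 2 * ρ s := funext hm
        rw [hmf]
        exact hG.const_mul _
      -- mean density bounds
      have hmean : ∀ x > 0, 4 * π * (x ^ 3 / 3 * ρ x) ≤ m x := by
        intro x hx
        have h1 : ∫ s in (0:ℝ)..x, s ^ 2 * ρ x ≤ ∫ s in (0:ℝ)..x, s ^ 2 * ρ s := by
          apply intervalIntegral.integral_mono_on hx.le
            (((continuous_pow 2).mul continuous_const).intervalIntegrable 0 x) (hint x hx)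
          intro s hs
          rcases eq_or_lt_of_le hs.1 with h | h
          · simp [← h]
          · exact mul_le_mul_of_nonneg_left (hρ_mono h (lt_of_lt_of_le h hs.2) hs.2) (sq_nonneg s)
        have h2 : ∫ s in (0:ℝ)..x, s ^ 2 * ρ x = x ^ 3 / 3 * ρ x := by
          rw [intervalIntegral.integral_mul_const, integral_pow]
          norm_num
        rw [hm x]
        have := h2 ▸ h1
        nlinarith [Real.pi_pos]
      have hmean2 : ∀ x y : ℝ, 0 < x → x ≤ y → m y / y ^ 3 ≤ m x / x ^ 3 := by
        intro x y hx hxy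
        have hy : 0 < y := lt_of_lt_of_le hx hxy
        have hixy : IntervalIntegrable (fun s => s ^ 2 * ρ s) volume x y := by
          apply ContinuousOn.intervalIntegrable_of_Icc hxy
          exact hf_cont.mono fun t ht => lt_of_lt_of_le hx ht.1
        have hsplit : m y = m x + 4 * π * ∫ s in x..y, s ^ 2 * ρ s := by
          rw [hm y, hm x, ← mul_add, intervalIntegral.integral_add_adjacent_intervals (hint x hx) hixy]
        have hbd : ∫ s in x..y, s ^ 2 * ρ s ≤ ∫ s in x..y, s ^ 2 * ρ x := by
          apply intervalIntegral.integral_mono_on hxy hixy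
            (((continuous_pow 2).mul continuous_const).intervalIntegrable x y)
          intro s hs
          exact mul_le_mul_of_nonneg_left (hρ_mono hx (lt_of_lt_of_le hx hs.1) hs.1) (sq_nonneg s)
        have h2 : ∫ s in x..y, s ^ 2 * ρ x = (y ^ 3 - x ^ 3) / 3 * ρ x := by
          rw [intervalIntegral.integral_mul_const, integral_pow]
          norm_num
        have hx3 : (0:ℝ) < x ^ 3 := by positivity
        have hy3 : (0:ℝ) < y ^ 3 := by positivity
        have hρx : 4 * π * ρ x * x ^ 3 ≤ 3 * m x := by
          have := hmean x hx
          nlinarith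
        have hy3x3 : x ^ 3 ≤ y ^ 3 := by
          have := pow_le_pow_left₀ hx.le hxy 3
          simpa using this
        have hρ0 : 0 ≤ ρ x := hρ_nonneg x hx
        have h3 : m y ≤ m x + 4 * π * ((y ^ 3 - x ^ 3) / 3 * ρ x) := by
          rw [hsplit]
          have := h2 ▸ hbd
          nlinarith [Real.pi_pos]
        rw [div_le_div_iff₀ hy3 hx3]
        nlinarith [mul_le_mul_of_nonneg_right hρx (sub_nonneg.2 hy3x3)]
      -- formula for lam'
      have hlam'eq : ∀ x > 0, lam' x = Real.exp (2 * lam x) * (4 * π * x * ρ x - m x / x ^ 2) := by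
        intro x hx
        have hu := hu_pos x hx
        have h2mder : HasDerivAt (fun y => 2 * m y) (2 * (4 * π * (x ^ 2 * ρ x))) x :=
          (hmd x hx).const_mul 2
        have hdiv : HasDerivAt (fun y => 2 * m y / y)
            ((2 * (4 * π * (x ^ 2 * ρ x)) * x - 2 * m x * 1) / x ^ 2) x :=
          h2mder.div (hasDerivAt_id x) hx.ne'
        have hsub : HasDerivAt (fun y => 1 - 2 * m y / y)
            (-((2 * (4 * π * (x ^ 2 * ρ x)) * x - 2 * m x * 1) / x ^ 2)) x := hdiv.const_sub 1
        have hfull := (hsub.log hu.ne').const_mul (-(1/2) : ℝ)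
        have hfun : lam = fun y => -(1/2) * Real.log (1 - 2 * m y / y) := funext hlam
        have huniq : lam' x =
            -(1/2) * (-((2 * (4 * π * (x ^ 2 * ρ x)) * x - 2 * m x * 1) / x ^ 2) / (1 - 2 * m x / x)) := by
          apply (hlam' x hx).unique
          rw [hfun]
          exact hfull
        have hinv : Real.exp (2 * lam x) = (1 - 2 * m x / x)⁻¹ := by
          rw [← hexp2 x hx, ← Real.exp_neg]; ring_nf
        have hAB : (2 * (4 * π * (x ^ 2 * ρ x)) * x - 2 * m x * 1) / x ^ 2 =
            2 * (4 * π * x * ρ x - m x / x ^ 2) := by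
          field_simp
        rw [huniq, hinv, hAB, div_eq_mul_inv]
        ring
      -- the Buchdahl function F and its monotonicity
      set F : ℝ → ℝ := fun y => Real.exp (μ y - lam y) * μ' y / y with hF
      have hFd : ∀ x > 0, HasDerivAt F
          (Real.exp (μ x - lam x) * (μ'' x + μ' x ^ 2 - lam' x * μ' x - μ' x / x) / x) x := by
        intro x hx
        have h1 : HasDerivAt (fun y => μ y - lam y) (μ' x - lam' x) x := (hμ' x hx).sub (hlam' x hx)
        have h3 := h1.exp.mul (hμ'' x hx)
        have h4 := h3.div (hasDerivAt_id x) hx.ne'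
        refine h4.congr_deriv ?_
        simp only [id, Pi.mul_apply]
        field_simp
        ring
      have hFd_nonpos : ∀ x > 0,
          Real.exp (μ x - lam x) * (μ'' x + μ' x ^ 2 - lam' x * μ' x - μ' x / x) / x ≤ 0 := by
        intro x hx
        have hbracket : μ'' x + μ' x ^ 2 - lam' x * μ' x - μ' x / x =
            Real.exp (2 * lam x) * (8 * π * (pT x - p x) + 4 * π * ρ x - 3 * m x / x ^ 3) := by
          have hE : Real.exp (-2 * lam x) = (Real.exp (2 * lam x))⁻¹ := by
            rw [← Real.exp_neg]; ring_nf
          have hf2 := hfield2 x hx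
          rw [hE, inv_mul_eq_iff_eq_mul₀ (Real.exp_pos _).ne'] at hf2
          have hμ''eq : μ'' x =
              Real.exp (2 * lam x) * (8 * π * pT x) - (μ' x + 1 / x) * (μ' x - lam' x) := by
            linarith [hf2]
          rw [hμ''eq, hfield1 x hx, hlam'eq x hx]
          field_simp
          ring
        have hx3 : (0:ℝ) < x ^ 3 := by positivity
        have hb2 : 8 * π * (pT x - p x) + 4 * π * ρ x - 3 * m x / x ^ 3 ≤ 0 := by
          have h1 := hpT_le x hx
          have h2 := hmean x hx
          have h3 : 4 * π * ρ x ≤ 3 * m x / x ^ 3 := by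
            rw [le_div_iff₀ hx3]
            nlinarith
          nlinarith [Real.pi_pos]
        rw [hbracket]
        apply div_nonpos_of_nonpos_of_nonneg _ hx.le
        exact mul_nonpos_of_nonneg_of_nonpos (Real.exp_nonneg _)
          (mul_nonpos_of_nonneg_of_nonpos (Real.exp_nonneg _) hb2)
      have hFanti : AntitoneOn F (Ioi 0) := by
        apply antitoneOn_of_deriv_nonpos (convex_Ioi 0)
        · exact fun x hx => (hFd x hx).continuousAt.continuousWithinAt
        · intro x hx
          rw [interior_Ioi] at hx
          exact (hFd x hx).differentiableAt.differentiableWithinAt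
        · intro x hx
          rw [interior_Ioi] at hx
          rw [(hFd x hx).deriv]
          exact hFd_nonpos x hx
      -- integration step
      set c : ℝ := 2 * m r / r ^ 3 with hc
      have hcpos : 0 < c := by rw [hc]; positivity
      set K : ℝ := F r with hK
      have hKnonneg : 0 ≤ K := by
        rw [hK]
        simp only [hF]
        apply div_nonneg _ hr.le
        exact mul_nonneg (Real.exp_nonneg _) (hμ'_nonneg r hr)
      have hpos_s : ∀ s ∈ Icc (0:ℝ) r, 0 < 1 - c * s ^ 2 := by
        intro s hs
        have h1 : c * s ^ 2 ≤ c * r ^ 2 := by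
          apply mul_le_mul_of_nonneg_left _ hcpos.le
          exact pow_le_pow_left₀ hs.1 hs.2 2
        have h2 : c * r ^ 2 = 2 * m r / r := by rw [hc]; field_simp
        have := hu_pos r hr
        nlinarith
      set φ : ℝ → ℝ := fun y => Real.exp (μ y) + K * ((1/c) * Real.sqrt (1 - c * y ^ 2)) with hφ
      have hφd : ∀ s ∈ Ioo (0:ℝ) r, HasDerivAt φ
          (Real.exp (μ s) * μ' s +
            K * ((1/c) * (1 / (2 * Real.sqrt (1 - c * s ^ 2)) * (-(c * (2 * s)))))) s := by
        intro s hs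
        have hpos : 0 < 1 - c * s ^ 2 := hpos_s s ⟨hs.1.le, hs.2.le⟩
        have h1 := (hμ' s hs.1).exp
        have hg : HasDerivAt (fun y : ℝ => 1 - c * y ^ 2) (-(c * (2 * s))) s := by
          have := ((hasDerivAt_pow 2 s).const_mul c).const_sub 1
          simpa using this
        have hsq := (Real.hasDerivAt_sqrt hpos.ne').comp s hg
        have h2 := (hsq.const_mul (1/c)).const_mul K
        exact h1.add h2
      have hφd_nonneg : ∀ s ∈ Ioo (0:ℝ) r, 0 ≤ Real.exp (μ s) * μ' s +
          K * ((1/c) * (1 / (2 * Real.sqrt (1 - c * s ^ 2)) * (-(c * (2 * s))))) := by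
        intro s hs
        have hpos : 0 < 1 - c * s ^ 2 := hpos_s s ⟨hs.1.le, hs.2.le⟩
        have hsqpos : 0 < Real.sqrt (1 - c * s ^ 2) := Real.sqrt_pos.2 hpos
        have hsimp : (1/c) * (1 / (2 * Real.sqrt (1 - c * s ^ 2)) * (-(c * (2 * s)))) =
            -(s / Real.sqrt (1 - c * s ^ 2)) := by
          field_simp
        have hFs : F r ≤ F s := hFanti (mem_Ioi.2 hs.1) (mem_Ioi.2 hr) hs.2.le
        have hid : s * Real.exp (lam s) * F s = Real.exp (μ s) * μ' s := by
          simp only [hF]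
          rw [Real.exp_sub]
          field_simp [hs.1.ne']
        have hms : c * s ^ 2 ≤ 2 * m s / s := by
          calc c * s ^ 2 = 2 * (m r / r ^ 3) * s ^ 2 := by rw [hc]; ring
            _ ≤ 2 * (m s / s ^ 3) * s ^ 2 := by
                nlinarith [hmean2 s r hs.1 hs.2.le, sq_nonneg s]
            _ = 2 * m s / s := by field_simp [hs.1.ne']
        have hsqle : Real.exp (-(lam s)) ≤ Real.sqrt (1 - c * s ^ 2) := by
          calc Real.exp (-(lam s)) = Real.sqrt (1 - 2 * m s / s) := (hsqrt s hs.1).symm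
            _ ≤ Real.sqrt (1 - c * s ^ 2) := Real.sqrt_le_sqrt (by linarith)
        have e1 : s / Real.sqrt (1 - c * s ^ 2) ≤ s * Real.exp (lam s) := by
          have h2 : 1 / Real.sqrt (1 - c * s ^ 2) ≤ 1 / Real.exp (-(lam s)) :=
            one_div_le_one_div_of_le (Real.exp_pos _) hsqle
          have h3 : (1:ℝ) / Real.exp (-(lam s)) = Real.exp (lam s) := by
            rw [Real.exp_neg, one_div, inv_inv]
          rw [h3] at h2
          calc s / Real.sqrt (1 - c * s ^ 2) = s * (1 / Real.sqrt (1 - c * s ^ 2)) := by ring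
            _ ≤ s * Real.exp (lam s) := by
                apply mul_le_mul_of_nonneg_left h2 hs.1.le
        have e2 : K * (s / Real.sqrt (1 - c * s ^ 2)) ≤ Real.exp (μ s) * μ' s := by
          calc K * (s / Real.sqrt (1 - c * s ^ 2)) ≤ K * (s * Real.exp (lam s)) :=
                mul_le_mul_of_nonneg_left e1 hKnonneg
            _ ≤ F s * (s * Real.exp (lam s)) := by
                apply mul_le_mul_of_nonneg_right hFs
                exact mul_nonneg hs.1.le (Real.exp_nonneg _)
            _ = s * Real.exp (lam s) * F s := by ring
            _ = Real.exp (μ s) * μ' s := hid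
        rw [hsimp]
        linarith
      have hμcont : ContinuousOn μ (Icc 0 r) := by
        intro s hs
        rcases eq_or_lt_of_le hs.1 with h0 | h0
        · rw [← h0]
          have h1 : Tendsto μ (nhdsWithin 0 (Ici 0)) (nhds (μ 0)) := by
            rw [← Set.Ioi_insert, nhdsWithin_insert, Filter.tendsto_sup]
            exact ⟨tendsto_pure_nhds μ 0, hμ0⟩
          exact h1.mono_left (nhdsWithin_mono 0 Icc_subset_Ici_self)
        · exact (hμ' s h0).continuousAt.continuousWithinAt
      have hφcont : ContinuousOn φ (Icc 0 r) := by
        apply ContinuousOn.add (Real.continuous_exp.comp_continuousOn hμcont)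
        apply Continuous.continuousOn
        exact continuous_const.mul (continuous_const.mul (Real.continuous_sqrt.comp
          (continuous_const.sub (continuous_const.mul (continuous_pow 2)))))
      have hφmono : MonotoneOn φ (Icc 0 r) := by
        apply monotoneOn_of_deriv_nonneg (convex_Icc 0 r) hφcont
        · intro s hs
          rw [interior_Icc] at hs
          exact (hφd s hs).differentiableAt.differentiableWithinAt
        · intro s hs
          rw [interior_Icc] at hs
          rw [(hφd s hs).deriv]
          exact hφd_nonneg s hs
      have hφ0r : φ 0 ≤ φ r := hφmono ⟨le_rfl, hr.le⟩ ⟨hr.le, le_rfl⟩ hr.le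
      have hφ0 : φ 0 = Real.exp (μ 0) + K * (1/c) := by
        simp [hφ, Real.sqrt_one]
      have hcr2 : 1 - c * r ^ 2 = 1 - 2 * m r / r := by
        rw [hc]; field_simp
      have hφr : φ r = Real.exp (μ r) + K * ((1/c) * Real.exp (-(lam r))) := by
        simp only [hφ]
        rw [hcr2, hsqrt r hr]
      have hstep : K * (1/c) * (1 - Real.exp (-(lam r))) ≤ Real.exp (μ r) - Real.exp (μ 0) := by
        rw [hφ0, hφr] at hφ0r
        nlinarith [hφ0r]
      have hKval : K = Real.exp (μ r + lam r) * (m r / r ^ 3 + 4 * π * p r) := by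
        have he : Real.exp (μ r - lam r) * Real.exp (2 * lam r) = Real.exp (μ r + lam r) := by
          rw [← Real.exp_add]; ring_nf
        rw [hK]
        simp only [hF]
        rw [hfield1 r hr, ← he]
        field_simp
      have hEc : Real.exp (μ r + lam r) / 2 ≤ K * (1/c) := by
        have h1 : Real.exp (μ r + lam r) * (c / 2) ≤ K := by
          rw [hKval]
          have hmc : m r / r ^ 3 = c / 2 := by rw [hc]; ring
          rw [hmc]
          have h4 : 0 ≤ Real.exp (μ r + lam r) * (4 * π * p r) := by
            apply mul_nonneg (Real.exp_nonneg _)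
            have := hp_nonneg r hr
            have := Real.pi_pos
            positivity
          nlinarith
        calc Real.exp (μ r + lam r) / 2 = Real.exp (μ r + lam r) * (c/2) * (1/c) := by
              field_simp
          _ ≤ K * (1/c) := mul_le_mul_of_nonneg_right h1 (by positivity)
      have hexpne : 0 ≤ 1 - Real.exp (-(lam r)) := by
        have : Real.exp (-(lam r)) ≤ 1 := Real.exp_le_one_iff.2 (by linarith [hlam_nonneg r hr])
        linarith
      have hstep2 : Real.exp (μ r + lam r) / 2 * (1 - Real.exp (-(lam r))) ≤
          K * (1/c) * (1 - Real.exp (-(lam r))) := mul_le_mul_of_nonneg_right hEc hexpne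
      have hfin : Real.exp (μ r + lam r) / 2 * (1 - Real.exp (-(lam r))) =
          1 / 2 * Real.exp (μ r) * (Real.exp (lam r) - 1) := by
        rw [Real.exp_add, Real.exp_neg]
        field_simp
      rw [ge_iff_le, ← hfin]
      linarith
  refine ⟨key1, ?_⟩
  -- PART 2
  have hB1 : 1 ≤ 3 - 2 * Real.exp (μ 0) := by
    have := Real.exp_le_one_iff.2 hμ00
    linarith
  have key2 : ∀ r > 0, 2 * m r / r ≤ 1 - 1 / (3 - 2 * Real.exp (μ 0)) ^ 2 := by
    intro r hr
    have h1 := key1 r hr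
    have hle1 : Real.exp (μ r) ≤ 1 := Real.exp_le_one_iff.2 (hμle0 r hr)
    have hE0 : 0 < Real.exp (μ 0) := Real.exp_pos _
    have hEr : 0 < Real.exp (μ r) := Real.exp_pos _
    have hL1 : 1 ≤ Real.exp (lam r) := by
      rw [show (1:ℝ) = Real.exp 0 by simp]
      exact Real.exp_le_exp.2 (hlam_nonneg r hr)
    have hlamB : Real.exp (lam r) ≤ 3 - 2 * Real.exp (μ 0) := by
      by_cases hL : Real.exp (lam r) ≤ 3
      · nlinarith
      · exfalso; nlinarith
    have hu := hu_pos r hr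
    have hB0 : (0:ℝ) < 3 - 2 * Real.exp (μ 0) := by linarith
    have hinvB : 1 / (3 - 2 * Real.exp (μ 0)) ≤ Real.exp (-(lam r)) := by
      rw [Real.exp_neg, one_div]
      exact inv_anti₀ (Real.exp_pos _) hlamB
    have hsq : Real.sqrt (1 - 2 * m r / r) = Real.exp (-(lam r)) := hsqrt r hr
    have h2 : 1 / (3 - 2 * Real.exp (μ 0)) ^ 2 ≤ 1 - 2 * m r / r := by
      have h3 : (1 / (3 - 2 * Real.exp (μ 0))) ^ 2 ≤ Real.sqrt (1 - 2 * m r / r) ^ 2 := by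
        apply pow_le_pow_left₀ (by positivity)
        rw [hsq]; exact hinvB
      rw [Real.sq_sqrt hu.le] at h3
      calc 1 / (3 - 2 * Real.exp (μ 0)) ^ 2 = (1 / (3 - 2 * Real.exp (μ 0))) ^ 2 := by
            rw [div_pow, one_pow]
        _ ≤ 1 - 2 * m r / r := h3
    linarith
  apply Real.sSup_le
  · rintro x ⟨r, hr, rfl⟩
    exact key2 r hr
  · have : 1 / (3 - 2 * Real.exp (μ 0)) ^ 2 ≤ 1 := by
      apply div_le_one_of_le₀
      · nlinarith
      · positivity
    linarith
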